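/- Let f(X) be a permutation polynomial over a ring of modulo 2^w. Then f(X) is a one-stroke polynomial over the ring if and only if for every integer w ≥ 1, f^{2^w}(0) ≡ 0 (mod 2^w) and f^{2^{w-1}}(0) ≢ 0 (mod 2^w). -/

import Mathlib

open Polynomial

/-- `f` is a permutation polynomial over a ring of modulo `2^w`:
for every `w ≥ 0`, the induced map on `ℤ/2^wℤ` is a bijection. -/
def IsPermPoly (f : Polynomial ℤ) : Prop :=
  ∀ w : ℕ, Function.Bijective (fun x : ZMod (2 ^ w) => f.eval₂ (Int.castRingHom (ZMod (2 ^ w))) x)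

/-- `f` is a one-stroke polynomial over a ring of modulo `2^w`:
it is a permutation polynomial and, for every `w ≥ 1` and every point of `ℤ/2^wℤ`,
the orbit `{f^i(X̄) : 0 ≤ i < 2^w}` is all of `ℤ/2^wℤ`. -/
def IsOneStroke (f : Polynomial ℤ) : Prop :=
  IsPermPoly f ∧ ∀ w : ℕ, 1 ≤ w → ∀ x : ℤ, ∀ y : ZMod (2 ^ w),
    ∃ i < 2 ^ w, (((fun t => f.eval t)^[i] x : ℤ) : ZMod (2 ^ w)) = y


lemma cast_iter_aux (f : Polynomial ℤ) (n : ℕ) (i : ℕ) (x : ℤ) :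
    (((fun t => f.eval t)^[i] x : ℤ) : ZMod n) =
      (fun z : ZMod n => f.eval₂ (Int.castRingHom (ZMod n)) z)^[i] (x : ZMod n) := by
  induction i generalizing x with
  | zero => rfl
  | succ k ih =>
    rw [Function.iterate_succ_apply, Function.iterate_succ_apply, ih]
    congr 1
    show ((f.eval x : ℤ) : ZMod n) = f.eval₂ (Int.castRingHom (ZMod n)) (x : ZMod n)
    rw [show ((x : ZMod n)) = (Int.castRingHom (ZMod n)) x from rfl,
      Polynomial.eval₂_at_apply]
    rfl

lemma cong_iff_aux (f : Polynomial ℤ) (w k : ℕ) :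
    ((fun t => f.eval t)^[k] 0 ≡ 0 [ZMOD 2 ^ w]) ↔
    (fun z : ZMod (2 ^ w) => f.eval₂ (Int.castRingHom (ZMod (2 ^ w))) z)^[k]
      (0 : ZMod (2 ^ w)) = 0 := by
  have h := cast_iter_aux f (2 ^ w) k 0
  rw [Int.cast_zero] at h
  rw [show ((2 : ℤ) ^ w) = ((2 ^ w : ℕ) : ℤ) from by push_cast; ring,
    ← ZMod.intCast_eq_intCast_iff, Int.cast_zero, h]


theorem stmt_4 (f : Polynomial ℤ) (hf : IsPermPoly f) :
    IsOneStroke f ↔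
      ∀ w : ℕ, 1 ≤ w →
        (fun t => f.eval t)^[2 ^ w] 0 ≡ 0 [ZMOD 2 ^ w] ∧
        ¬ ((fun t => f.eval t)^[2 ^ (w - 1)] 0 ≡ 0 [ZMOD 2 ^ w]) := by
  constructor
  · rintro ⟨-, hs⟩ w hw
    set σ : ZMod (2 ^ w) → ZMod (2 ^ w) :=
      fun z => f.eval₂ (Int.castRingHom (ZMod (2 ^ w))) z with hσ
    have hn0 : 0 < 2 ^ w := Nat.pow_pos (by norm_num)
    haveI : NeZero (2 ^ w) := ⟨hn0.ne'⟩
    have hsurj : ∀ y : ZMod (2 ^ w), ∃ i < 2 ^ w, σ^[i] 0 = y := by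
      intro y
      obtain ⟨i, hi, h⟩ := hs w hw 0 y
      rw [cast_iter_aux, Int.cast_zero] at h
      exact ⟨i, hi, h⟩
    have hFsurj : Function.Surjective (fun i : Fin (2 ^ w) => σ^[i.1] 0) := by
      intro y
      obtain ⟨i, hi, h⟩ := hsurj y
      exact ⟨⟨i, hi⟩, h⟩
    have hFinj : Function.Injective (fun i : Fin (2 ^ w) => σ^[i.1] 0) := by
      have hcard : Fintype.card (Fin (2 ^ w)) = Fintype.card (ZMod (2 ^ w)) := by
        simp [ZMod.card]
      exact ((Fintype.bijective_iff_surjective_and_card _).2 ⟨hFsurj, hcard⟩).1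
    have hσinj : Function.Injective σ := (hf w).1
    have h1 : σ^[2 ^ w] 0 = 0 := by
      obtain ⟨j, hj, hje⟩ := hsurj (σ^[2 ^ w] 0)
      rcases Nat.eq_zero_or_pos j with rfl | hjpos
      · simpa using hje.symm
      · exfalso
        have hjle : j ≤ 2 ^ w := hj.le
        have key : σ^[j] (σ^[2 ^ w - j] 0) = σ^[j] 0 := by
          rw [← Function.iterate_add_apply, Nat.add_sub_cancel' hjle]
          exact hje.symm
        have h0 : σ^[2 ^ w - j] 0 = 0 := hσinj.iterate j key
        have : (⟨2 ^ w - j, by omega⟩ : Fin (2 ^ w)) = ⟨0, hn0⟩ :=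
          hFinj (by simpa using h0)
        have := Fin.mk.injEq (n := 2 ^ w) (2 ^ w - j) _ 0 _ ▸ this
        omega
    have h2 : σ^[2 ^ (w - 1)] 0 ≠ 0 := by
      intro h
      have hlt : 2 ^ (w - 1) < 2 ^ w :=
        Nat.pow_lt_pow_right (by norm_num) (by omega)
      have : (⟨2 ^ (w - 1), hlt⟩ : Fin (2 ^ w)) = ⟨0, hn0⟩ := hFinj (by simpa using h)
      have h2pos : 0 < 2 ^ (w - 1) := Nat.pow_pos (by norm_num)
      have := Fin.mk.injEq (n := 2 ^ w) (2 ^ (w - 1)) _ 0 _ ▸ this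
      omega
    exact ⟨(cong_iff_aux f w _).2 h1, fun hc => h2 ((cong_iff_aux f w _).1 hc)⟩
  · intro H
    refine ⟨hf, ?_⟩
    intro w hw x y
    set σ : ZMod (2 ^ w) → ZMod (2 ^ w) :=
      fun z => f.eval₂ (Int.castRingHom (ZMod (2 ^ w))) z with hσ
    have hn0 : 0 < 2 ^ w := Nat.pow_pos (by norm_num)
    haveI : NeZero (2 ^ w) := ⟨hn0.ne'⟩
    obtain ⟨H1, H2⟩ := H w hw
    have h1 : σ^[2 ^ w] 0 = 0 := (cong_iff_aux f w _).1 H1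
    have h2 : σ^[2 ^ (w - 1)] 0 ≠ 0 := fun h => H2 ((cong_iff_aux f w _).2 h)
    have hper : Function.IsPeriodicPt σ (2 ^ w) 0 := h1
    have hdvd : Function.minimalPeriod σ 0 ∣ 2 ^ w := hper.minimalPeriod_dvd
    have hm : Function.minimalPeriod σ 0 = 2 ^ w := by
      obtain ⟨k, hk, hkeq⟩ := (Nat.dvd_prime_pow Nat.prime_two).1 hdvd
      rcases eq_or_lt_of_le hk with rfl | hk'
      · exact hkeq
      · exfalso
        apply h2
        exact (Function.isPeriodicPt_iff_minimalPeriod_dvd).2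
          (hkeq ▸ pow_dvd_pow 2 (by omega))
    have hFinj : Function.Injective (fun i : Fin (2 ^ w) => σ^[i.1] 0) := by
      intro i j hij
      exact Fin.ext (Function.iterate_injOn_Iio_minimalPeriod
        (x := (0 : ZMod (2 ^ w))) (f := σ)
        (by simp only [Set.mem_Iio, hm]; exact i.2)
        (by simp only [Set.mem_Iio, hm]; exact j.2) hij)
    have hFsurj : Function.Surjective (fun i : Fin (2 ^ w) => σ^[i.1] 0) := by
      have hcard : Fintype.card (Fin (2 ^ w)) = Fintype.card (ZMod (2 ^ w)) := by
        simp [ZMod.card]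
      exact ((Fintype.bijective_iff_injective_and_card _).2 ⟨hFinj, hcard⟩).2
    obtain ⟨j, hj⟩ := hFsurj ((x : ZMod (2 ^ w)))
    obtain ⟨k, hk⟩ := hFsurj y
    refine ⟨(k.1 + 2 ^ w - j.1) % 2 ^ w, Nat.mod_lt _ hn0, ?_⟩
    rw [cast_iter_aux]
    rw [← hj, ← Function.iterate_add_apply]
    have hmod : ((k.1 + 2 ^ w - j.1) % 2 ^ w + j.1) % 2 ^ w = k.1 := by
      rw [Nat.mod_add_mod, Nat.sub_add_cancel (by have := j.2; omega),
        Nat.add_mod_right, Nat.mod_eq_of_lt k.2]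
    calc σ^[(k.1 + 2 ^ w - j.1) % 2 ^ w + j.1] 0
        = σ^[((k.1 + 2 ^ w - j.1) % 2 ^ w + j.1) % Function.minimalPeriod σ 0] 0 := by
          rw [Function.iterate_mod_minimalPeriod_eq]
      _ = y := by rw [hm, hmod]; exact hk
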